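/- Let Ḡ > 0, w ≥ 2Ḡ², and let G : ℕ → ℝ satisfy 0 ≤ G_t ≤ Ḡ for all t ≥ 1. Then for every integer T ≥ 1, ∑_{t=1}^{T} G_{t+1}² / (w + ∑_{i=1}^{t} G_i²) ≤ log(T + 2). -/

import Mathlib

lemma div_sub_le_log_sub (a b : ℝ) (ha : 0 < a) (hab : a ≤ b) :
    (b - a) / b ≤ Real.log b - Real.log a := by
  have hb : 0 < b := lt_of_lt_of_le ha hab
  have h := Real.log_le_sub_one_of_pos (show (0:ℝ) < a / b by positivity)
  rw [Real.log_div (ne_of_gt ha) (ne_of_gt hb)] at h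
  have : (b - a) / b = 1 - a / b := by field_simp
  linarith

/-- Logarithmic bound on the cumulative normalized squared gradient-norm sum arising in
the analysis of the RStorm adaptive step sizes. -/
theorem rstorm_log_sum_bound
    (Gbar w : ℝ) (hGbar : 0 < Gbar) (hw : 2 * Gbar ^ 2 ≤ w)
    (G : ℕ → ℝ) (hG : ∀ t : ℕ, 1 ≤ t → 0 ≤ G t ∧ G t ≤ Gbar) :
    ∀ T : ℕ, 1 ≤ T →
      (∑ t ∈ Finset.Icc 1 T, G (t + 1) ^ 2 / (w + ∑ i ∈ Finset.Icc 1 t, G i ^ 2))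
        ≤ Real.log ((T : ℝ) + 2) := by
  intro T hT
  have hGb2 : 0 < Gbar ^ 2 := by positivity
  have hwpos : 0 < w := by nlinarith
  set B : ℕ → ℝ := fun t => w / 2 + ∑ i ∈ Finset.Icc 2 (t + 1), G i ^ 2 with hBdef
  have hGsq : ∀ i : ℕ, 1 ≤ i → G i ^ 2 ≤ Gbar ^ 2 := by
    intro i hi
    obtain ⟨h1, h2⟩ := hG i hi
    nlinarith
  have hBpos : ∀ t, 0 < B t := by
    intro t
    have : 0 ≤ ∑ i ∈ Finset.Icc 2 (t + 1), G i ^ 2 :=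
      Finset.sum_nonneg fun i _ => sq_nonneg _
    simp only [hBdef]
    linarith
  have hBsucc : ∀ t, B (t + 1) = B t + G (t + 2) ^ 2 := by
    intro t
    simp only [hBdef]
    rw [← Finset.insert_Icc_right_eq_Icc_add_one (by omega : 2 ≤ t + 1 + 1),
      Finset.sum_insert (by simp)]
    ring
  -- B t ≤ S t for t ≥ 1
  have hBS : ∀ t : ℕ, 1 ≤ t → B t ≤ w + ∑ i ∈ Finset.Icc 1 t, G i ^ 2 := by
    intro t ht
    have hsplit : ∑ i ∈ Finset.Icc 1 t, G i ^ 2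
        = G 1 ^ 2 + ∑ i ∈ Finset.Icc 2 t, G i ^ 2 := by
      rw [← Finset.insert_Icc_add_one_left_eq_Icc ht, Finset.sum_insert (by simp)]
      rfl
    have hsplit2 : ∑ i ∈ Finset.Icc 2 (t + 1), G i ^ 2
        = (∑ i ∈ Finset.Icc 2 t, G i ^ 2) + G (t + 1) ^ 2 := by
      rw [← Finset.insert_Icc_right_eq_Icc_add_one (by omega : 2 ≤ t + 1),
        Finset.sum_insert (by simp)]
      ring
    have h1 : 0 ≤ G 1 ^ 2 := sq_nonneg _
    have h2 : G (t + 1) ^ 2 ≤ Gbar ^ 2 := hGsq _ (by omega)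
    simp only [hBdef]
    rw [hsplit, hsplit2]
    linarith
  -- telescoping bound
  have key : ∀ n : ℕ,
      (∑ t ∈ Finset.Icc 1 n, G (t + 1) ^ 2 / (w + ∑ i ∈ Finset.Icc 1 t, G i ^ 2))
        ≤ Real.log (B n) - Real.log (B 0) := by
    intro n
    induction n with
    | zero => simp
    | succ m ih =>
      rw [Finset.sum_Icc_succ_top (by omega : 1 ≤ m + 1)]
      have hstep : G (m + 1 + 1) ^ 2 / (w + ∑ i ∈ Finset.Icc 1 (m + 1), G i ^ 2)
          ≤ Real.log (B (m + 1)) - Real.log (B m) := by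
        have hS : B (m + 1) ≤ w + ∑ i ∈ Finset.Icc 1 (m + 1), G i ^ 2 :=
          hBS (m + 1) (by omega)
        have h1 : G (m + 1 + 1) ^ 2 / (w + ∑ i ∈ Finset.Icc 1 (m + 1), G i ^ 2)
            ≤ G (m + 1 + 1) ^ 2 / B (m + 1) :=
          div_le_div_of_nonneg_left (sq_nonneg _) (hBpos _) hS
        have h2 : (B (m + 1) - B m) / B (m + 1)
            ≤ Real.log (B (m + 1)) - Real.log (B m) := by
          apply div_sub_le_log_sub _ _ (hBpos m)
          rw [hBsucc m]; nlinarith [sq_nonneg (G (m + 2))]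
        have h3 : B (m + 1) - B m = G (m + 1 + 1) ^ 2 := by rw [hBsucc m]; ring
        rw [h3] at h2
        linarith
      linarith
  have hB0 : B 0 = w / 2 := by simp [hBdef]
  -- bound B T
  have hBT : B T ≤ (w / 2) * ((T : ℝ) + 1) := by
    have hcard : ∑ i ∈ Finset.Icc 2 (T + 1), G i ^ 2
        ≤ (Finset.Icc 2 (T + 1)).card • Gbar ^ 2 := by
      apply Finset.sum_le_card_nsmul
      intro i hi
      exact hGsq i (by simp at hi; omega)
    have hcard' : (Finset.Icc 2 (T + 1)).card = T := by
      rw [Nat.card_Icc]; omega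
    rw [hcard'] at hcard
    have : (T : ℝ) * Gbar ^ 2 ≤ (T : ℝ) * (w / 2) := by
      apply mul_le_mul_of_nonneg_left (by linarith) (by positivity)
    simp only [hBdef, nsmul_eq_mul] at hcard ⊢
    nlinarith
  have hlogT : Real.log (B T) ≤ Real.log (w / 2) + Real.log ((T : ℝ) + 1) := by
    calc Real.log (B T) ≤ Real.log ((w / 2) * ((T : ℝ) + 1)) :=
          Real.log_le_log (hBpos T) hBT
      _ = Real.log (w / 2) + Real.log ((T : ℝ) + 1) := by
          rw [Real.log_mul (by positivity) (by positivity)]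
  have hlast : Real.log ((T : ℝ) + 1) ≤ Real.log ((T : ℝ) + 2) :=
    Real.log_le_log (by positivity) (by linarith)
  have := key T
  rw [hB0] at this
  linarith
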